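/- Let λ be a regular cardinal and X a linearly ordered set with |X| = λ > 2^{ℵ_α}. Then X contains a λ-full subset of order type ω_{α+1} (or reverse order type ω_{α+1}), or a subset of order type λ (or reverse order type λ). -/

import Mathlib

open Cardinal Set

universe u

/-- `Y` is `l`-full on the right in `X`: for every `y ∈ Y`, the union of the
intervals `(y, y')_X` over larger elements `y' ∈ Y` has cardinality `l`. -/
def FullRight {X : Type u} [LinearOrder X] (l : Cardinal.{u}) (Y : Set X) : Prop :=
  ∀ y ∈ Y, #{x : X | ∃ y' ∈ Y, y < y' ∧ y < x ∧ x < y'} = l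

/-- `Y` is `l`-full on the left in `X`. -/
def FullLeft {X : Type u} [LinearOrder X] (l : Cardinal.{u}) (Y : Set X) : Prop :=
  ∀ y ∈ Y, #{x : X | ∃ y' ∈ Y, y' < y ∧ y' < x ∧ x < y} = l

/-- `Y` is completely `l`-full in `X`: every interval of `X` between two
elements of `Y` has cardinality `l`. -/
def CompletelyFull {X : Type u} [LinearOrder X] (l : Cardinal.{u}) (Y : Set X) : Prop :=
  ∀ y ∈ Y, ∀ y' ∈ Y, y < y' → #{x : X | y < x ∧ x < y'} = l


lemma buildMono {X : Type u} [LinearOrder X] (l : Cardinal.{u}) (U : Set X)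
    (H : ∀ s : Set X, s ⊆ U → #s < l → ∃ z ∈ U, ∀ t ∈ s, t < z) :
    ∃ f : l.ord.ToType → X, StrictMono f := by
  classical
  have wfT : WellFounded ((· < ·) : l.ord.ToType → l.ord.ToType → Prop) := IsWellFounded.wf
  have key : ∀ i : l.ord.ToType, ∀ prev : ∀ j, j < i → U,
      ∃ z : U, ∀ j (h : j < i), ((prev j h : X) < (z : X)) := by
    intro i prev
    obtain ⟨z, hzU, hz⟩ := H (Set.range fun p : Set.Iio i => ((prev p.1 p.2 : U) : X))
      (by rintro w ⟨p, rfl⟩; exact (prev p.1 p.2).2)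
      (lt_of_le_of_lt Cardinal.mk_range_le (by
          have := Cardinal.mk_Iio_lt i (by rw [Cardinal.mk_ord_toType, Ordinal.type_toType])
          rwa [Cardinal.mk_ord_toType] at this))
    exact ⟨⟨z, hzU⟩, fun j h => hz _ ⟨⟨j, h⟩, rfl⟩⟩
  choose step hstep using key
  let F : l.ord.ToType → U := WellFounded.fix wfT step
  have hF : ∀ i, F i = step i fun j _ => F j := fun i => WellFounded.fix_eq wfT step i
  refine ⟨fun i => (F i : X), fun j i h => ?_⟩
  have h2 := hstep i (fun j _ => F j) j h
  rw [← hF i] at h2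
  exact h2

lemma buildAnti {X : Type u} [LinearOrder X] (l : Cardinal.{u}) (U : Set X)
    (H : ∀ s : Set X, s ⊆ U → #s < l → ∃ z ∈ U, ∀ t ∈ s, z < t) :
    ∃ f : l.ord.ToType → X, StrictAnti f := by
  obtain ⟨f, hf⟩ := buildMono (X := Xᵒᵈ) l (OrderDual.ofDual ⁻¹' U)
    (fun s hs hc => H s hs hc)
  exact ⟨fun i => OrderDual.ofDual (f i), fun a b h => hf h⟩


section ER
open scoped Classical
variable {L : Type u} [LinearOrder L] (μ : Cardinal.{u})

/-- candidate set at stage `i` of the ramification for `x`, given previous values. -/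
private def erCnd (x : L) {i : μ.ord.ToType} (prev : ∀ j, j < i → Option L) : Set L :=
  {y : L | ∀ j (h : j < i), ∃ a, prev j h = some a ∧ y ≠ a ∧ (y < a ↔ x < a)}

private noncomputable def erStep (x : L) (i : μ.ord.ToType)
    (prev : ∀ j, j < i → Option L) : Option L :=
  if hC : (erCnd μ x prev).Nonempty then
    (if hC.some = x then none else some hC.some) else none

private noncomputable def erG (x : L) : μ.ord.ToType → Option L :=
  WellFounded.fix (IsWellFounded.wf) (erStep μ x)

/-- candidate set at stage `i` in terms of `erG`. -/
private def erC (x : L) (i : μ.ord.ToType) : Set L :=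
  erCnd μ x (fun j (_ : j < i) => erG μ x j)

private lemma erG_eq (x : L) (i : μ.ord.ToType) :
    erG μ x i = if hC : (erC μ x i).Nonempty then
      (if hC.some = x then none else some hC.some) else none :=
  WellFounded.fix_eq _ _ _

variable {μ}

private lemma erG_some {x a : L} {i : μ.ord.ToType} (h : erG μ x i = some a) :
    ∃ hC : (erC μ x i).Nonempty, a = hC.some ∧ a ≠ x := by
  rw [erG_eq] at h
  by_cases hC : (erC μ x i).Nonempty
  · rw [dif_pos hC] at h
    by_cases hx : hC.some = x
    · rw [if_pos hx] at h; exact absurd h (by simp)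
    · rw [if_neg hx] at h
      obtain rfl : hC.some = a := Option.some.inj h
      exact ⟨hC, rfl, hx⟩
  · rw [dif_neg hC] at h; exact absurd h (by simp)

private lemma erG_some_mem {x a : L} {i : μ.ord.ToType} (h : erG μ x i = some a) :
    a ∈ erC μ x i := by
  obtain ⟨hC, rfl, -⟩ := erG_some h
  exact hC.some_mem

private lemma erG_none_eq {x : L} {i : μ.ord.ToType} (hC : (erC μ x i).Nonempty)
    (h : erG μ x i = none) : hC.some = x := by
  rw [erG_eq] at h
  by_cases hC' : (erC μ x i).Nonempty
  · rw [dif_pos hC'] at h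
    by_cases hx : hC'.some = x
    · exact hx
    · rw [if_neg hx] at h; exact absurd h (by simp)
  · exact absurd hC hC'

private lemma x_mem_erC {x : L} {i : μ.ord.ToType}
    (halive : ∀ j, j < i → ∃ a, erG μ x j = some a) : x ∈ erC μ x i := by
  intro j h
  obtain ⟨a, ha⟩ := halive j h
  exact ⟨a, ha, ((erG_some ha).2.2).symm, Iff.rfl⟩

private lemma some_congr {S S' : Set L} (h : S = S') (hS : S.Nonempty) (hS' : S'.Nonempty) :
    hS.some = hS'.some := by subst h; rfl

end ER

lemma chainLemma (κ : Cardinal.{u}) (hκ : ℵ₀ ≤ κ) (L : Type u) [LinearOrder L]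
    (hL : 2 ^ κ < #L) :
    ∃ f : (Order.succ κ).ord.ToType → L, StrictMono f ∨ StrictAnti f := by
  classical
  set μ := Order.succ κ with hμ
  have wfT : WellFounded ((· < ·) : μ.ord.ToType → μ.ord.ToType → Prop) := IsWellFounded.wf
  by_cases hdie : ∀ x : L, ∃ i : μ.ord.ToType, erG μ x i = none
  · -- every ramification dies: count and contradict
    exfalso
    let δ : L → μ.ord.ToType := fun x => wfT.min {i | erG μ x i = none} (hdie x)
    have hδnone : ∀ x, erG μ x (δ x) = none := fun x => wfT.min_mem _ (hdie x)
    have halive : ∀ x (j : μ.ord.ToType), j < δ x → ∃ a, erG μ x j = some a := by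
      intro x j hj
      cases hopt : erG μ x j with
      | some a => exact ⟨a, rfl⟩
      | none => exact absurd hj (wfT.not_lt_min _ hopt)
    let Ecol : L → μ.ord.ToType → Prop := fun x j => ∃ a, erG μ x j = some a ∧ x < a
    have hEcol : ∀ {x a : L} {j}, erG μ x j = some a → (Ecol x j ↔ x < a) := by
      intro x a j h
      constructor
      · rintro ⟨b, hb, hxb⟩
        rw [h] at hb
        obtain rfl := Option.some.inj hb
        exact hxb
      · exact fun h' => ⟨a, h, h'⟩
    have main : ∀ x x' : L, δ x = δ x' → (∀ j, j < δ x → (Ecol x j ↔ Ecol x' j)) → x = x' := by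
      intro x x' hδ hcols
      have both : ∀ j : μ.ord.ToType, j ≤ δ x →
          erC μ x j = erC μ x' j ∧ (j < δ x → erG μ x j = erG μ x' j) := by
        refine fun j => wfT.induction
          (C := fun j => j ≤ δ x → erC μ x j = erC μ x' j ∧ (j < δ x → erG μ x j = erG μ x' j))
          j ?_
        intro j IH hj
        have hent : ∀ j', j' < j →
            ∃ a, erG μ x j' = some a ∧ erG μ x' j' = some a ∧ (x < a ↔ x' < a) := by
          intro j' h'
          have hj' : j' < δ x := lt_of_lt_of_le h' hj
          obtain ⟨a, ha⟩ := halive x j' hj'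
          have he : erG μ x j' = erG μ x' j' := (IH j' h' (le_of_lt hj')).2 hj'
          refine ⟨a, ha, he ▸ ha, ?_⟩
          rw [← hEcol ha, ← hEcol (x := x') (he ▸ ha)]
          exact hcols j' hj'
        have hCeq : erC μ x j = erC μ x' j := by
          ext y
          simp only [erC, erCnd, Set.mem_setOf_eq]
          constructor
          · intro hy j' h'
            obtain ⟨a, ha, ha', hiff⟩ := hent j' h'
            obtain ⟨b, hb, hyb, hyx⟩ := hy j' h'
            rw [ha] at hb
            obtain rfl := Option.some.inj hb
            exact ⟨a, ha', hyb, hyx.trans hiff⟩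
          · intro hy j' h'
            obtain ⟨a, ha, ha', hiff⟩ := hent j' h'
            obtain ⟨b, hb, hyb, hyx⟩ := hy j' h'
            rw [ha'] at hb
            obtain rfl := Option.some.inj hb
            exact ⟨a, ha, hyb, hyx.trans hiff.symm⟩
        refine ⟨hCeq, fun hjlt => ?_⟩
        obtain ⟨m, hm⟩ := halive x j hjlt
        obtain ⟨m', hm'⟩ := halive x' j (hδ ▸ hjlt)
        obtain ⟨hC1, hm1, -⟩ := erG_some hm
        obtain ⟨hC2, hm2, -⟩ := erG_some hm'
        rw [hm, hm', hm1, hm2, some_congr hCeq hC1 hC2]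
      have hCeqδ : erC μ x (δ x) = erC μ x' (δ x) := (both (δ x) le_rfl).1
      have hne1 : (erC μ x (δ x)).Nonempty :=
        ⟨x, x_mem_erC (fun j hj => halive x j hj)⟩
      have hne2 : (erC μ x' (δ x)).Nonempty := hCeqδ ▸ hne1
      have e1 : hne1.some = x := erG_none_eq hne1 (hδnone x)
      have e2 : hne2.some = x' := by
        have hnone := hδnone x'
        rw [← hδ] at hnone
        exact erG_none_eq hne2 hnone
      rw [← e1, ← e2, some_congr hCeqδ hne1 hne2]
    have perD : ∀ d : μ.ord.ToType, #{x : L | δ x = d} ≤ 2 ^ κ := by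
      intro d
      have hinj : Function.Injective
          (fun x : {x : L | δ x = d} => {j : Set.Iio d | Ecol x.1 j.1}) := by
        intro x x' h
        apply Subtype.ext
        refine main x.1 x'.1 (x.2.trans x'.2.symm) ?_
        intro j hj
        have hj' : j ∈ Set.Iio d := x.2 ▸ hj
        have := Set.ext_iff.mp h ⟨j, hj'⟩
        simpa using this
      calc #{x : L | δ x = d} ≤ #(Set (Set.Iio d)) := Cardinal.mk_le_of_injective hinj
        _ = 2 ^ #(Set.Iio d) := Cardinal.mk_set
        _ ≤ 2 ^ κ := by
            apply Cardinal.power_le_power_left two_ne_zero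
            exact Order.lt_succ_iff.mp (by
                have := Cardinal.mk_Iio_lt d (by rw [Cardinal.mk_ord_toType, Ordinal.type_toType])
                rwa [Cardinal.mk_ord_toType] at this)
    have hcount : #L ≤ 2 ^ κ := by
      have cover : (Set.univ : Set L) = ⋃ d : μ.ord.ToType, {x | δ x = d} := by
        ext x
        simp only [Set.mem_univ, Set.mem_iUnion, Set.mem_setOf_eq, true_iff]
        exact ⟨δ x, rfl⟩
      have h1 : #L = #(Set.univ : Set L) := (Cardinal.mk_univ).symm
      rw [h1, cover]
      calc #(⋃ d : μ.ord.ToType, {x : L | δ x = d})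
          ≤ Cardinal.sum (fun d : μ.ord.ToType => #{x : L | δ x = d}) :=
            Cardinal.mk_iUnion_le_sum_mk
        _ ≤ Cardinal.sum (fun _ : μ.ord.ToType => 2 ^ κ) := Cardinal.sum_le_sum _ _ perD
        _ = #(μ.ord.ToType) * 2 ^ κ := Cardinal.sum_const' _ _
        _ = 2 ^ κ := by
            rw [Cardinal.mk_ord_toType, Cardinal.mul_eq_max (hκ.trans (Order.le_succ κ))
              (hκ.trans (Cardinal.cantor κ).le)]
            exact max_eq_right (Order.succ_le_of_lt (Cardinal.cantor κ))
    exact absurd hcount (not_le.mpr hL)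
  · -- some ramification survives everywhere
    push_neg at hdie
    obtain ⟨x, hx⟩ := hdie
    have halive : ∀ i, ∃ a, erG μ x i = some a := by
      intro i
      cases hopt : erG μ x i with
      | none => exact absurd hopt (hx i)
      | some a => exact ⟨a, rfl⟩
    choose a ha using halive
    have prop : ∀ {j i : μ.ord.ToType}, j < i → a i ≠ a j ∧ (a i < a j ↔ x < a j) := by
      intro j i hji
      have hmem := erG_some_mem (ha i)
      obtain ⟨b, hb, hne, hiff⟩ := hmem j hji
      have hb' : erG μ x j = some b := hb
      rw [ha j] at hb'
      obtain rfl := Option.some.inj hb'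
      exact ⟨hne, hiff⟩
    have hTcard : #(μ.ord.ToType) = μ := Cardinal.mk_ord_toType μ
    set S : Set (μ.ord.ToType) := {i | x < a i} with hS
    have hbig : μ ≤ #S ∨ μ ≤ #((Sᶜ : Set (μ.ord.ToType))) := by
      by_contra hcon
      push_neg at hcon
      have h1 : #S ≤ κ := Order.lt_succ_iff.mp hcon.1
      have h2 : #((Sᶜ : Set (μ.ord.ToType))) ≤ κ := Order.lt_succ_iff.mp hcon.2
      have h3 : μ ≤ κ := by
        calc μ = #(μ.ord.ToType) := hTcard.symm
          _ = #((S ∪ Sᶜ : Set _)) := by rw [Set.union_compl_self]; exact (Cardinal.mk_univ).symm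
          _ ≤ #S + #((Sᶜ : Set (μ.ord.ToType))) := Cardinal.mk_union_le _ _
          _ ≤ κ + κ := add_le_add h1 h2
          _ = κ := Cardinal.add_eq_self hκ
      exact absurd h3 (not_le.mpr (Order.lt_succ κ))
    have emb : ∀ W : Set (μ.ord.ToType), μ ≤ #W →
        ∃ e : μ.ord.ToType → μ.ord.ToType, StrictMono e ∧ ∀ i, e i ∈ W := by
      intro W hW
      haveI i1 : IsWellOrder μ.ord.ToType (· < ·) := isWellOrder_lt
      haveI i2 : IsWellOrder (↥W) (· < ·) := isWellOrder_lt
      have h1 : μ.ord ≤ @Ordinal.type (↥W) (· < ·) i2 := by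
        rw [Cardinal.ord_le, Ordinal.card_type]
        exact hW
      have h2 : @Ordinal.type (μ.ord.ToType) (· < ·) i1 ≤ @Ordinal.type (↥W) (· < ·) i2 := by
        rw [Ordinal.type_toType]
        exact h1
      obtain ⟨e⟩ := (@Ordinal.type_le_iff' _ _ _ _ i1 i2).mp h2
      refine ⟨fun i => (e i : μ.ord.ToType), fun i j hij => ?_, fun i => (e i).2⟩
      exact Subtype.coe_lt_coe.mpr (e.map_rel_iff.mpr hij)
    rcases hbig with hW | hW
    · obtain ⟨e, emon, ein⟩ := emb S hW
      refine ⟨fun i => a (e i), Or.inr fun i j hij => ?_⟩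
      exact (prop (emon hij)).2.mpr (ein i)
    · obtain ⟨e, emon, ein⟩ := emb Sᶜ hW
      refine ⟨fun i => a (e i), Or.inl fun i j hij => ?_⟩
      have hp := prop (emon hij)
      have hnot : ¬ a (e j) < a (e i) := fun hlt => (ein i) (hp.2.mp hlt)
      exact lt_of_le_of_ne (not_lt.mp hnot) (Ne.symm hp.1)


lemma relIncl {X : Type u} [LinearOrder X] (x y z : X) :
    Set.Ioo (min x z) (max x z) ⊆
      (Set.Ioo (min x y) (max x y) ∪ Set.Ioo (min y z) (max y z)) ∪ {y} := by
  rintro w ⟨h1, h2⟩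
  rcases lt_trichotomy w y with hwy | rfl | hyw
  · rcases min_lt_iff.mp h1 with hx | hz
    · exact Or.inl (Or.inl ⟨min_lt_iff.mpr (Or.inl hx), lt_of_lt_of_le hwy (le_max_right x y)⟩)
    · exact Or.inl (Or.inr ⟨min_lt_iff.mpr (Or.inr hz), lt_of_lt_of_le hwy (le_max_left y z)⟩)
  · exact Or.inr rfl
  · rcases lt_max_iff.mp h2 with hx | hz
    · exact Or.inl (Or.inl ⟨min_lt_iff.mpr (Or.inr hyw), lt_max_iff.mpr (Or.inl hx)⟩)
    · exact Or.inl (Or.inr ⟨min_lt_iff.mpr (Or.inl hyw), lt_max_iff.mpr (Or.inr hz)⟩)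

theorem stmt11 (α : Ordinal.{u}) (l : Cardinal.{u}) (hl : l.IsRegular)
    (X : Type u) [LinearOrder X] (hX : #X = l)
    (hbig : 2 ^ Cardinal.aleph α < l) :
    (∃ f : (Cardinal.aleph (α + 1)).ord.ToType → X,
        (StrictMono f ∧ FullRight l (Set.range f)) ∨
        (StrictAnti f ∧ FullLeft l (Set.range f))) ∨
    (∃ f : l.ord.ToType → X, StrictMono f ∨ StrictAnti f) := by
  classical
  have hκ : ℵ₀ ≤ aleph α := aleph0_le_aleph α
  have hl0 : ℵ₀ ≤ l := hl.aleph0_le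
  have h2l : (2 : Cardinal.{u}) < l :=
    lt_of_lt_of_le (by exact_mod_cast Cardinal.nat_lt_aleph0 2) hl0
  have h1l : (1 : Cardinal.{u}) < l := lt_trans one_lt_two h2l
  set E : X → X → Prop := fun x y => #(Set.Ioo (min x y) (max x y)) < l with hE
  have hsymm : ∀ a b : X, E a b → E b a := by
    intro a b h
    simp only [hE] at h ⊢
    rwa [min_comm b a, max_comm b a]
  letI s : Setoid X := ⟨E, by
    refine ⟨fun x => ?_, fun {x y} h => hsymm x y h, fun {x y z} hxy hyz => ?_⟩
    · show #(Set.Ioo (min x x) (max x x)) < l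
      simp only [min_self, max_self, Set.Ioo_self, Cardinal.mk_emptyCollection]
      exact lt_of_lt_of_le Cardinal.aleph0_pos hl0
    · show #(Set.Ioo (min x z) (max x z)) < l
      calc #(Set.Ioo (min x z) (max x z))
          ≤ #(((Set.Ioo (min x y) (max x y) ∪ Set.Ioo (min y z) (max y z)) ∪ {y} : Set X)) :=
            Cardinal.mk_le_mk_of_subset (relIncl x y z)
        _ ≤ #((Set.Ioo (min x y) (max x y) ∪ Set.Ioo (min y z) (max y z) : Set X))
              + #({y} : Set X) := Cardinal.mk_union_le _ _
        _ ≤ (#(Set.Ioo (min x y) (max x y)) + #(Set.Ioo (min y z) (max y z)))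
              + #({y} : Set X) := add_le_add (Cardinal.mk_union_le _ _) le_rfl
        _ < l := Cardinal.add_lt_of_lt hl0 (Cardinal.add_lt_of_lt hl0 hxy hyz)
            (by rw [Cardinal.mk_singleton]; exact h1l)⟩
  by_cases hA : ∀ y0 : X, #{x : X | E x y0} < l
  · -- Case B : all classes small; pass to representatives
    set rep : X → X := fun x => (Quotient.mk s x).out with hrep
    have hequiv : ∀ x : X, E (rep x) x := fun x => Quotient.mk_out x
    have hrepeq : ∀ x y : X, E x y → rep x = rep y := by
      intro x y h
      simp only [hrep]
      rw [Quotient.sound h]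
    have hrr : ∀ x : X, rep (rep x) = rep x := fun x => hrepeq _ _ (hequiv x)
    have hR : ∀ u v : X, u ∈ Set.range rep → v ∈ Set.range rep → E u v → u = v := by
      rintro u v ⟨xu, rfl⟩ ⟨xv, rfl⟩ h
      have h1 : rep (rep xu) = rep (rep xv) := hrepeq _ _ h
      rwa [hrr, hrr] at h1
    have hRbig : 2 ^ aleph α < #(Set.range rep) := by
      by_contra hc
      push_neg at hc
      have hfib := Cardinal.mk_congr
        (Equiv.sigmaFiberEquiv (fun x : X => (⟨rep x, Set.mem_range_self x⟩ : Set.range rep)))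
      rw [Cardinal.mk_sigma] at hfib
      have hlt : Cardinal.sum (fun r : Set.range rep =>
          #{x : X // (⟨rep x, Set.mem_range_self x⟩ : Set.range rep) = r}) < l := by
        apply Cardinal.sum_lt_of_isRegular hl (lt_of_le_of_lt hc hbig)
        intro r
        have hsub : {x : X | (⟨rep x, Set.mem_range_self x⟩ : Set.range rep) = r}
            ⊆ {x : X | E x ↑r} := by
          intro x hx
          have hxr : rep x = ↑r := congrArg Subtype.val hx
          exact hxr ▸ hsymm _ _ (hequiv x)
        exact lt_of_le_of_lt (Cardinal.mk_le_mk_of_subset hsub) (hA ↑r)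
      have hXl : #X < l := hfib ▸ hlt
      rw [hX] at hXl
      exact lt_irrefl l hXl
    obtain ⟨f0, hf0⟩ := chainLemma (aleph α) hκ (↥(Set.range rep)) hRbig
    left
    rw [Ordinal.add_one_eq_succ, Cardinal.aleph_succ]
    haveI : NoMaxOrder (Order.succ (aleph α)).ord.ToType :=
      Cardinal.noMaxOrder (hκ.trans (Order.le_succ _))
    have hfull : ∀ u v : X, u ∈ Set.range rep → v ∈ Set.range rep → u < v →
        l ≤ #{x : X | u < x ∧ x < v} := by
      intro u v hu hv huv
      have hne : ¬ E u v := fun h => absurd (hR u v hu hv h) (ne_of_lt huv)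
      simp only [hE] at hne
      have h2 := not_lt.mp hne
      rwa [min_eq_left huv.le, max_eq_right huv.le] at h2
    rcases hf0 with hmono | hanti
    · refine ⟨fun i => (f0 i : X),
        Or.inl ⟨fun i j hij => Subtype.coe_lt_coe.mpr (hmono hij), ?_⟩⟩
      intro y hy
      obtain ⟨i, rfl⟩ := hy
      obtain ⟨j, hij⟩ := exists_gt i
      have hlt : ((f0 i : X)) < (f0 j : X) := Subtype.coe_lt_coe.mpr (hmono hij)
      apply le_antisymm
      · exact hX ▸ Cardinal.mk_set_le _
      · refine le_trans (hfull _ _ (f0 i).2 (f0 j).2 hlt) (Cardinal.mk_le_mk_of_subset ?_)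
        rintro w ⟨hw1, hw2⟩
        exact ⟨(f0 j : X), ⟨j, rfl⟩, hlt, hw1, hw2⟩
    · refine ⟨fun i => (f0 i : X),
        Or.inr ⟨fun i j hij => Subtype.coe_lt_coe.mpr (hanti hij), ?_⟩⟩
      intro y hy
      obtain ⟨i, rfl⟩ := hy
      obtain ⟨j, hij⟩ := exists_gt i
      have hlt : ((f0 j : X)) < (f0 i : X) := Subtype.coe_lt_coe.mpr (hanti hij)
      apply le_antisymm
      · exact hX ▸ Cardinal.mk_set_le _
      · refine le_trans (hfull _ _ (f0 j).2 (f0 i).2 hlt) (Cardinal.mk_le_mk_of_subset ?_)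
        rintro w ⟨hw1, hw2⟩
        exact ⟨(f0 j : X), ⟨j, rfl⟩, hlt, hw1, hw2⟩
  · -- Case A : some class has full size
    push_neg at hA
    obtain ⟨y0, hy0'⟩ := hA
    have hy0 : l ≤ #{x : X | E x y0} := not_lt.mp (by exact_mod_cast hy0'.not_gt)
    right
    have hIoo_up : ∀ t : X, E t y0 → y0 ≤ t → #(Set.Ioo y0 t) < l := by
      intro t ht hyt
      simp only [hE] at ht
      rwa [min_eq_right hyt, max_eq_left hyt] at ht
    have hIoo_dn : ∀ t : X, E t y0 → t ≤ y0 → #(Set.Ioo t y0) < l := by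
      intro t ht hty
      simp only [hE] at ht
      rwa [min_eq_left hty, max_eq_right hty] at ht
    have hsplit : l ≤ #(({x | E x y0} ∩ Ici y0 : Set X)) ∨
        l ≤ #(({x | E x y0} ∩ Iic y0 : Set X)) := by
      by_contra hc
      push_neg at hc
      have hsub : {x | E x y0} ⊆ ({x | E x y0} ∩ Ici y0) ∪ ({x | E x y0} ∩ Iic y0) := by
        intro w hw
        rcases le_total y0 w with h | h
        · exact Or.inl ⟨hw, h⟩
        · exact Or.inr ⟨hw, h⟩
      have hle := hy0.trans
        ((Cardinal.mk_le_mk_of_subset hsub).trans (Cardinal.mk_union_le _ _))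
      exact absurd hle (not_le.mpr (Cardinal.add_lt_of_lt hl0 hc.1 hc.2))
    have hpair : ∀ a b : X, #({a, b} : Set X) < l := by
      intro a b
      have h2 : #({a, b} : Set X) ≤ 2 := by
        have := Cardinal.mk_insert_le (s := ({b} : Set X)) (a := a)
        rwa [Cardinal.mk_singleton, one_add_one_eq_two] at this
      exact lt_of_le_of_lt h2 h2l
    rcases hsplit with hU | hV
    · set U : Set X := {x | E x y0} ∩ Ici y0 with hUdef
      have hH : ∀ T : Set X, T ⊆ U → #T < l → ∃ z ∈ U, ∀ t ∈ T, t < z := by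
        intro T hTsub hTcard
        have hbadsmall : ∀ t : X, t ∈ U → #((U ∩ Iic t : Set X)) < l := by
          intro t ht
          have h1 : (U ∩ Iic t : Set X) ⊆ Set.Ioo y0 t ∪ {y0, t} := by
            rintro w ⟨⟨hwE, hwIci⟩, hwt⟩
            rcases eq_or_lt_of_le (hwIci : y0 ≤ w) with rfl | hgt
            · exact Or.inr (Or.inl rfl)
            · rcases eq_or_lt_of_le (hwt : w ≤ t) with rfl | hlt2
              · exact Or.inr (Or.inr rfl)
              · exact Or.inl ⟨hgt, hlt2⟩
          calc #((U ∩ Iic t : Set X))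
              ≤ #((Set.Ioo y0 t ∪ ({y0, t} : Set X) : Set X)) :=
                Cardinal.mk_le_mk_of_subset h1
            _ ≤ #(Set.Ioo y0 t) + #(({y0, t} : Set X)) := Cardinal.mk_union_le _ _
            _ < l := Cardinal.add_lt_of_lt hl0 (hIoo_up t ht.1 ht.2) (hpair y0 t)
        have hbadcard : #(⋃ t : T, ((U ∩ Iic (t : X)) : Set X)) < l := by
          apply lt_of_le_of_lt Cardinal.mk_iUnion_le_sum_mk
          exact Cardinal.sum_lt_of_isRegular hl hTcard (fun t => hbadsmall t (hTsub t.2))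
        have hnot : ¬ U ⊆ ⋃ t : T, ((U ∩ Iic (t : X)) : Set X) := by
          intro hsub
          exact absurd (hU.trans (Cardinal.mk_le_mk_of_subset hsub)) (not_le.mpr hbadcard)
        obtain ⟨z, hzU, hznot⟩ := Set.not_subset.mp hnot
        refine ⟨z, hzU, fun t ht => ?_⟩
        by_contra hzt
        exact hznot (Set.mem_iUnion.mpr ⟨⟨t, ht⟩, hzU, not_lt.mp hzt⟩)
      obtain ⟨f, hf⟩ := buildMono l U hH
      exact ⟨f, Or.inl hf⟩
    · set V : Set X := {x | E x y0} ∩ Iic y0 with hVdef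
      have hH : ∀ T : Set X, T ⊆ V → #T < l → ∃ z ∈ V, ∀ t ∈ T, z < t := by
        intro T hTsub hTcard
        have hbadsmall : ∀ t : X, t ∈ V → #((V ∩ Ici t : Set X)) < l := by
          intro t ht
          have h1 : (V ∩ Ici t : Set X) ⊆ Set.Ioo t y0 ∪ {y0, t} := by
            rintro w ⟨⟨hwE, hwIic⟩, hwt⟩
            rcases eq_or_lt_of_le (hwt : t ≤ w) with rfl | hgt
            · exact Or.inr (Or.inr rfl)
            · rcases eq_or_lt_of_le (hwIic : w ≤ y0) with rfl | hlt2
              · exact Or.inr (Or.inl rfl)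
              · exact Or.inl ⟨hgt, hlt2⟩
          calc #((V ∩ Ici t : Set X))
              ≤ #((Set.Ioo t y0 ∪ ({y0, t} : Set X) : Set X)) :=
                Cardinal.mk_le_mk_of_subset h1
            _ ≤ #(Set.Ioo t y0) + #(({y0, t} : Set X)) := Cardinal.mk_union_le _ _
            _ < l := Cardinal.add_lt_of_lt hl0 (hIoo_dn t ht.1 ht.2) (hpair y0 t)
        have hbadcard : #(⋃ t : T, ((V ∩ Ici (t : X)) : Set X)) < l := by
          apply lt_of_le_of_lt Cardinal.mk_iUnion_le_sum_mk
          exact Cardinal.sum_lt_of_isRegular hl hTcard (fun t => hbadsmall t (hTsub t.2))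
        have hnot : ¬ V ⊆ ⋃ t : T, ((V ∩ Ici (t : X)) : Set X) := by
          intro hsub
          exact absurd (hV.trans (Cardinal.mk_le_mk_of_subset hsub)) (not_le.mpr hbadcard)
        obtain ⟨z, hzV, hznot⟩ := Set.not_subset.mp hnot
        refine ⟨z, hzV, fun t ht => ?_⟩
        by_contra hzt
        exact hznot (Set.mem_iUnion.mpr ⟨⟨t, ht⟩, hzV, not_lt.mp hzt⟩)
      obtain ⟨f, hf⟩ := buildAnti l V hH
      exact ⟨f, Or.inr hf⟩
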